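/- For n = 3, the polynomial h_3 does not belong to the ideal generated by 𝒫_3 ∪ 𝒬_3 in the polynomial ring ℝ[p_{ijkl} : i,j,k,l ∈ {1,2,3}] in 81 variables; nevertheless h_3 vanishes on SOT_{2,3}. -/

import Mathlib

open Finset MvPolynomial

/-- The set `𝒫ₙ` of linear polynomials `p_{abcd} − p_{σ₁(a)σ₁(b)σ₂(c)σ₂(d)}` in the entries
of an `n×n×n×n` tensor, where `σ₁` permutes `{a,b}` and `σ₂` permutes `{c,d}`. -/
def Pset (n : ℕ) : Set (MvPolynomial (Fin n × Fin n × Fin n × Fin n) ℝ) :=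
  {f | ∃ a b c d : Fin n,
    f = X (a, b, c, d) - X (a, b, c, d) ∨
    f = X (a, b, c, d) - X (b, a, c, d) ∨
    f = X (a, b, c, d) - X (a, b, d, c) ∨
    f = X (a, b, c, d) - X (b, a, d, c)}

/-- The set `𝒬ₙ` of quadratic polynomials `g⁽¹⁾` and `g⁽²⁾` in the entries of an `n×n×n×n`
tensor. -/
def Qset (n : ℕ) : Set (MvPolynomial (Fin n × Fin n × Fin n × Fin n) ℝ) :=
  {g | ∃ a b c d e f : Fin n,
    g = ∑ t : Fin n, (X (a, b, e, t) * X (c, d, f, t) - X (a, b, f, t) * X (c, d, e, t)) ∨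
    g = ∑ t : Fin n, (X (e, t, a, b) * X (f, t, c, d) - X (f, t, a, b) * X (e, t, c, d))}

/-- The degree-`n` polynomial `hₙ`; the product over `t : Fin n` of `p_{kₜ σ(t) k_{t-1} γ(t)}`
uses cyclic `Fin n` subtraction, encoding the convention `k₀ = kₙ`. -/
noncomputable def hpoly (n : ℕ) [NeZero n] : MvPolynomial (Fin n × Fin n × Fin n × Fin n) ℝ :=
  ∑ k : Fin n → Fin n, ∑ σ : Equiv.Perm (Fin n), ∑ γ : Equiv.Perm (Fin n),
    (((Equiv.Perm.sign σ : ℤ) * (Equiv.Perm.sign γ : ℤ) : ℤ) :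
        MvPolynomial (Fin n × Fin n × Fin n × Fin n) ℝ) *
      ∏ t : Fin n, X (k t, σ t, k (t - 1), γ t)

/-- `P ∈ SOT_{2,n}`: the `n×n×n×n` tensor `P` is the contraction along the third modes of two
symmetrically odeco tensors built from orthonormal families `v` and `w` in `ℝ^n`. -/
def InSOT2 (n : ℕ) (P : Fin n → Fin n → Fin n → Fin n → ℝ) : Prop :=
  ∃ (lam mu : Fin n → ℝ) (v w : Fin n → Fin n → ℝ),
    (∀ i j, (∑ k, v i k * v j k) = if i = j then 1 else 0) ∧
    (∀ i j, (∑ k, w i k * w j k) = if i = j then 1 else 0) ∧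
    ∀ a b c d, P a b c d =
      ∑ s, (∑ i, lam i * (v i a * v i b * v i s)) * (∑ j, mu j * (w j c * w j d * w j s))

open Equiv Matrix

noncomputable def sg (σ : Equiv.Perm (Fin 3)) : ℝ := ((Equiv.Perm.sign σ : ℤ) : ℝ)

lemma perm3_univ : (Finset.univ : Finset (Equiv.Perm (Fin 3))) =
    {1, Equiv.swap 0 1, Equiv.swap 0 2, Equiv.swap 1 2,
     Equiv.swap 0 1 * Equiv.swap 1 2, Equiv.swap 1 2 * Equiv.swap 0 1} := by decide

lemma perm3_sum {M : Type*} [AddCommMonoid M] (f : Equiv.Perm (Fin 3) → M) :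
    ∑ σ : Equiv.Perm (Fin 3), f σ =
      f 1 + f (Equiv.swap 0 1) + f (Equiv.swap 0 2) + f (Equiv.swap 1 2) +
      f (Equiv.swap 0 1 * Equiv.swap 1 2) + f (Equiv.swap 1 2 * Equiv.swap 0 1) := by
  rw [perm3_univ]
  rw [Finset.sum_insert (by decide), Finset.sum_insert (by decide),
      Finset.sum_insert (by decide), Finset.sum_insert (by decide),
      Finset.sum_insert (by decide), Finset.sum_singleton]
  simp [add_assoc]

lemma sum_fun3_perm (f : (Fin 3 → Fin 3) → ℝ) (hf : ∀ g, ¬Function.Injective g → f g = 0) :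
    ∑ g : Fin 3 → Fin 3, f g = ∑ α : Equiv.Perm (Fin 3), f ⇑α := by
  classical
  have h1 : ∑ g : Fin 3 → Fin 3, f g
      = ∑ g ∈ Finset.univ.filter (Function.Bijective), f g := by
    rw [Finset.sum_filter_of_ne]
    intro g _ hg
    by_contra hb
    exact hg (hf g (fun hinj => hb (Finite.injective_iff_bijective.mp hinj)))
  rw [h1]
  refine (Finset.sum_bij (fun (α : Equiv.Perm (Fin 3)) _ => ⇑α) ?_ ?_ ?_ ?_).symm
  · intro α _; exact Finset.mem_filter.mpr ⟨Finset.mem_univ _, α.bijective⟩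
  · intro a _ b _ h; exact Equiv.coe_fn_injective h
  · intro g hg
    simp only [Finset.mem_filter] at hg
    exact ⟨Equiv.ofBijective g hg.2, Finset.mem_univ _, rfl⟩
  · intro α _; rfl

lemma permsum_det (u : Fin 3 → Fin 3 → ℝ) (i : Fin 3 → Fin 3) :
    ∑ σ : Equiv.Perm (Fin 3), sg σ * ∏ t, u (i t) (σ t)
      = ((Matrix.of u).submatrix i id).det := by
  rw [← Matrix.det_transpose, Matrix.det_apply']
  exact Finset.sum_congr rfl fun σ _ => rfl

lemma det_zero_of_not_inj (u : Fin 3 → Fin 3 → ℝ) (i : Fin 3 → Fin 3)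
    (h : ¬Function.Injective i) : ((Matrix.of u).submatrix i id).det = 0 := by
  rw [Function.not_injective_iff] at h
  obtain ⟨a, b, hab, hne⟩ := h
  exact Matrix.det_zero_of_row_eq hne (by funext s; simp [Matrix.submatrix, hab])

lemma det_perm (u : Fin 3 → Fin 3 → ℝ) (α : Equiv.Perm (Fin 3)) :
    ((Matrix.of u).submatrix ⇑α id).det = sg α * (Matrix.of u).det := by
  rw [Matrix.det_permute]; rfl

lemma sg_mul_self (α : Equiv.Perm (Fin 3)) : sg α * sg α = 1 := by
  unfold sg
  rcases Int.units_eq_one_or (Equiv.Perm.sign α) with h | h <;> rw [h] <;> norm_num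

lemma evalA (P : Fin 3 → Fin 3 → Fin 3 → Fin 3 → ℝ) :
    eval (fun x => P x.1 x.2.1 x.2.2.1 x.2.2.2) (hpoly 3) =
    ∑ k : Fin 3 → Fin 3, ∑ σ : Equiv.Perm (Fin 3), ∑ γ : Equiv.Perm (Fin 3),
      sg σ * sg γ * ∏ t, P (k t) (σ t) (k (t - 1)) (γ t) := by
  simp only [hpoly, map_sum, _root_.map_mul, map_prod, eval_X, map_intCast, Int.cast_mul]
  rfl

noncomputable def xm : Fin 3 → Fin 3 → ℝ := fun a b => if (a : ℕ) + (b : ℕ) = 2 then 1 else 0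

lemma xm_symm (a b : Fin 3) : xm a b = xm b a := by simp [xm, Nat.add_comm]

lemma xm_det : (Matrix.of xm).det = -1 := by
  rw [Matrix.det_fin_three]
  norm_num [xm, Matrix.of_apply]

lemma part1_value :
    eval (fun x => xm x.1 x.2.1 * xm x.2.2.1 x.2.2.2) (hpoly 3) = 6 := by
  rw [evalA (fun a b c d => xm a b * xm c d)]
  have step1 : ∀ k : Fin 3 → Fin 3,
      (∑ σ : Equiv.Perm (Fin 3), ∑ γ : Equiv.Perm (Fin 3),
        sg σ * sg γ * ∏ t, xm (k t) (σ t) * xm (k (t - 1)) (γ t))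
      = ((Matrix.of xm).submatrix k id).det *
        ((Matrix.of xm).submatrix (fun t => k (t - 1)) id).det := by
    intro k
    rw [← permsum_det, ← permsum_det, Finset.sum_mul_sum]
    refine Finset.sum_congr rfl fun σ _ => Finset.sum_congr rfl fun γ _ => ?_
    rw [Finset.prod_mul_distrib]
    ring
  simp only [step1]
  rw [sum_fun3_perm _ (fun g hg => by rw [det_zero_of_not_inj _ _ hg, zero_mul])]
  have step2 : ∀ α : Equiv.Perm (Fin 3),
      ((Matrix.of xm).submatrix ⇑α id).det *
        ((Matrix.of xm).submatrix (fun t => α (t - 1)) id).det = 1 := by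
    intro α
    have h2 : (fun t : Fin 3 => α (t - 1)) = ⇑(α * Equiv.subRight (1 : Fin 3)) := rfl
    rw [h2, det_perm, det_perm, xm_det]
    have hsg : sg (α * Equiv.subRight (1 : Fin 3)) = sg α := by
      unfold sg
      rw [Equiv.Perm.sign_mul,
        show Equiv.Perm.sign (Equiv.subRight (1 : Fin 3) : Equiv.Perm (Fin 3)) = 1 from by decide,
        mul_one]
    rw [hsg]
    linear_combination sg_mul_self α
  rw [Finset.sum_congr rfl (fun α _ => step2 α), Finset.sum_const]
  norm_num [show Fintype.card (Equiv.Perm (Fin 3)) = 6 by decide]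

def e3 : (Fin 3 → Fin 3) ≃ (Fin 3 × Fin 3 × Fin 3) where
  toFun k := (k 0, k 1, k 2)
  invFun p := ![p.1, p.2.1, p.2.2]
  left_inv := by intro k; funext t; fin_cases t <;> rfl
  right_inv := by intro p; rfl

lemma sum_fun3 (F : (Fin 3 → Fin 3) → ℝ) :
    ∑ k : Fin 3 → Fin 3, F k = ∑ a : Fin 3, ∑ b : Fin 3, ∑ c : Fin 3, F ![a, b, c] := by
  rw [← Equiv.sum_comp e3.symm F, Fintype.sum_prod_type]
  simp only [Fintype.sum_prod_type]
  rfl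

noncomputable def Cm (v w : Fin 3 → Fin 3 → ℝ) : Matrix (Fin 3) (Fin 3) ℝ :=
  Matrix.of v * (Matrix.of w)ᵀ

lemma Cm_apply (v w : Fin 3 → Fin 3 → ℝ) (i j : Fin 3) :
    Cm v w i j = ∑ s, v i s * w j s := by
  simp [Cm, Matrix.mul_apply]

lemma Cm_orth (v w : Fin 3 → Fin 3 → ℝ)
    (hv : ∀ i j, (∑ k, v i k * v j k) = if i = j then 1 else 0)
    (hw : ∀ i j, (∑ k, w i k * w j k) = if i = j then 1 else 0) (i j : Fin 3) :
    ∑ u, Cm v w i u * Cm v w j u = if i = j then 1 else 0 := by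
  have hV : Matrix.of v * (Matrix.of v)ᵀ = 1 := by
    ext a b; simp [Matrix.mul_apply, Matrix.transpose_apply, hv, Matrix.one_apply]
  have hW : Matrix.of w * (Matrix.of w)ᵀ = 1 := by
    ext a b; simp [Matrix.mul_apply, Matrix.transpose_apply, hw, Matrix.one_apply]
  have hW' : (Matrix.of w)ᵀ * Matrix.of w = 1 := mul_eq_one_comm.mp hW
  have hC : Cm v w * (Cm v w)ᵀ = 1 := by
    unfold Cm
    rw [Matrix.transpose_mul, Matrix.transpose_transpose, Matrix.mul_assoc,
      ← Matrix.mul_assoc (Matrix.of w)ᵀ, hW', Matrix.one_mul, hV]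
  have := congrFun (congrFun hC i) j
  simp only [Matrix.mul_apply, Matrix.transpose_apply, Matrix.one_apply] at this
  rw [← this]

lemma sum_k (v w : Fin 3 → Fin 3 → ℝ) (i j : Fin 3 → Fin 3) :
    ∑ k : Fin 3 → Fin 3, ∏ t, (v (i t) (k t) * w (j t) (k (t - 1)))
      = ∏ t, Cm v w (i t) (j (t + 1)) := by
  rw [sum_fun3]
  simp only [Fin.prod_univ_three, Cm_apply, Fin.sum_univ_three,
    show (0 : Fin 3) - 1 = 2 from rfl, show (1 : Fin 3) - 1 = 0 from rfl,
    show (2 : Fin 3) - 1 = 1 from rfl, show (0 : Fin 3) + 1 = 1 from rfl,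
    show (1 : Fin 3) + 1 = 2 from rfl, show (2 : Fin 3) + 1 = 0 from rfl,
    Matrix.cons_val_zero, Matrix.cons_val_one, Matrix.head_cons,
    show ∀ x y z : Fin 3, ![x, y, z] 2 = z from fun _ _ _ => rfl]
  ring

section main
variable (lam mu : Fin 3 → ℝ) (v w : Fin 3 → Fin 3 → ℝ) (P : Fin 3 → Fin 3 → Fin 3 → Fin 3 → ℝ)

lemma stepB
    (hP : ∀ a b c d, P a b c d =
      ∑ s, (∑ i, lam i * (v i a * v i b * v i s)) * (∑ j, mu j * (w j c * w j d * w j s)))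
    (a b c d : Fin 3) :
    P a b c d = ∑ q : Fin 3 × Fin 3,
      lam q.1 * mu q.2 * Cm v w q.1 q.2 * (v q.1 a * v q.1 b * (w q.2 c * w q.2 d)) := by
  rw [hP, Fintype.sum_prod_type]
  simp only [Cm_apply, Fin.sum_univ_three]
  ring

end main

def pe : ((Fin 3 → Fin 3) × (Fin 3 → Fin 3)) ≃ (Fin 3 → Fin 3 × Fin 3) where
  toFun p := fun t => (p.1 t, p.2 t)
  invFun φ := (fun t => (φ t).1, fun t => (φ t).2)
  left_inv p := rfl
  right_inv φ := rfl

section main2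
variable (lam mu : Fin 3 → ℝ) (v w : Fin 3 → Fin 3 → ℝ) (P : Fin 3 → Fin 3 → Fin 3 → Fin 3 → ℝ)

lemma key (σ γ : Equiv.Perm (Fin 3))
    (hP : ∀ a b c d, P a b c d =
      ∑ s, (∑ i, lam i * (v i a * v i b * v i s)) * (∑ j, mu j * (w j c * w j d * w j s))) :
    ∑ k : Fin 3 → Fin 3, ∏ t, P (k t) (σ t) (k (t - 1)) (γ t)
      = ∑ i : Fin 3 → Fin 3, ∑ j : Fin 3 → Fin 3,
          ((∏ t, (lam (i t) * mu (j t) * Cm v w (i t) (j t))) *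
            (∏ t, Cm v w (i t) (j (t + 1)))) *
          ((∏ t, v (i t) (σ t)) * (∏ t, w (j t) (γ t))) := by
  have h1 : ∀ k : Fin 3 → Fin 3, (∏ t, P (k t) (σ t) (k (t - 1)) (γ t))
      = ∑ φ : Fin 3 → Fin 3 × Fin 3, ∏ t,
          (fun t (q : Fin 3 × Fin 3) => lam q.1 * mu q.2 * Cm v w q.1 q.2 *
            (v q.1 (k t) * v q.1 (σ t) * (w q.2 (k (t - 1)) * w q.2 (γ t)))) t (φ t) := by
    intro k
    refine (Finset.prod_congr rfl fun t _ => stepB lam mu v w P hP _ _ _ _).trans ?_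
    exact Fintype.prod_sum _
  simp only [h1]
  rw [Finset.sum_comm]
  have h2 : ∀ φ : Fin 3 → Fin 3 × Fin 3,
      (∑ k : Fin 3 → Fin 3, ∏ t, lam (φ t).1 * mu (φ t).2 * Cm v w (φ t).1 (φ t).2 *
        (v (φ t).1 (k t) * v (φ t).1 (σ t) * (w (φ t).2 (k (t - 1)) * w (φ t).2 (γ t))))
      = ((∏ t, (lam (φ t).1 * mu (φ t).2 * Cm v w (φ t).1 (φ t).2)) *
          ((∏ t, v (φ t).1 (σ t)) * (∏ t, w (φ t).2 (γ t)))) *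
        ∏ t, Cm v w ((fun t => (φ t).1) t) ((fun t => (φ t).2) (t + 1)) := by
    intro φ
    rw [← sum_k v w (fun t => (φ t).1) (fun t => (φ t).2), Finset.mul_sum]
    refine Finset.sum_congr rfl fun k _ => ?_
    rw [← Finset.prod_mul_distrib, ← Finset.prod_mul_distrib, ← Finset.prod_mul_distrib]
    exact Finset.prod_congr rfl fun t _ => by ring
  simp only [h2]
  rw [← Equiv.sum_comp pe]
  rw [Fintype.sum_prod_type]
  refine Finset.sum_congr rfl fun i _ => Finset.sum_congr rfl fun j _ => ?_
  simp only [pe, Equiv.coe_fn_mk]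
  ring
end main2

lemma sg_one' : sg 1 = 1 := by
  unfold sg; rw [show Equiv.Perm.sign (1 : Equiv.Perm (Fin 3)) = 1 from by decide]; norm_num
lemma sg_s01 : sg (Equiv.swap 0 1) = -1 := by
  unfold sg; rw [show Equiv.Perm.sign (Equiv.swap (0 : Fin 3) 1) = -1 from by decide]; norm_num
lemma sg_s02 : sg (Equiv.swap 0 2) = -1 := by
  unfold sg; rw [show Equiv.Perm.sign (Equiv.swap (0 : Fin 3) 2) = -1 from by decide]; norm_num
lemma sg_s12 : sg (Equiv.swap 1 2) = -1 := by
  unfold sg; rw [show Equiv.Perm.sign (Equiv.swap (1 : Fin 3) 2) = -1 from by decide]; norm_num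
lemma sg_c1 : sg (Equiv.swap 0 1 * Equiv.swap 1 2) = 1 := by
  unfold sg
  rw [show Equiv.Perm.sign (Equiv.swap (0 : Fin 3) 1 * Equiv.swap 1 2) = 1 from by decide]
  norm_num
lemma sg_c2 : sg (Equiv.swap 1 2 * Equiv.swap 0 1) = 1 := by
  unfold sg
  rw [show Equiv.Perm.sign (Equiv.swap (1 : Fin 3) 2 * Equiv.swap 0 1) = 1 from by decide]
  norm_num

lemma Kfinal (lam mu : Fin 3 → ℝ) (dV dW : ℝ) (C : Matrix (Fin 3) (Fin 3) ℝ)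
    (h02 : ∑ u, C 0 u * C 2 u = 0) (h10 : ∑ u, C 1 u * C 0 u = 0)
    (h21 : ∑ u, C 2 u * C 1 u = 0) :
    ∑ α : Equiv.Perm (Fin 3), ∑ β : Equiv.Perm (Fin 3),
      ((∏ t, (lam (α t) * mu (β t) * C (α t) (β t))) * (∏ t, C (α t) (β (t + 1)))) *
        ((sg α * dV) * (sg β * dW)) = 0 := by
  rw [Fin.sum_univ_three] at h02 h10 h21
  simp only [perm3_sum, Fin.prod_univ_three,
    show (0 : Fin 3) + 1 = 1 from rfl, show (1 : Fin 3) + 1 = 2 from rfl,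
    show (2 : Fin 3) + 1 = 0 from rfl,
    sg_one', sg_s01, sg_s02, sg_s12, sg_c1, sg_c2, Equiv.Perm.mul_apply,
    show ∀ t : Fin 3, (1 : Equiv.Perm (Fin 3)) t = t from fun _ => rfl,
    show (Equiv.swap (0:Fin 3) 1) 0 = 1 from rfl,
    show (Equiv.swap (0:Fin 3) 1) 1 = 0 from rfl,
    show (Equiv.swap (0:Fin 3) 1) 2 = 2 from rfl,
    show (Equiv.swap (0:Fin 3) 2) 0 = 2 from rfl,
    show (Equiv.swap (0:Fin 3) 2) 1 = 1 from rfl,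
    show (Equiv.swap (0:Fin 3) 2) 2 = 0 from rfl,
    show (Equiv.swap (1:Fin 3) 2) 0 = 0 from rfl,
    show (Equiv.swap (1:Fin 3) 2) 1 = 2 from rfl,
    show (Equiv.swap (1:Fin 3) 2) 2 = 1 from rfl,
    show (Equiv.swap (0:Fin 3) 1 * Equiv.swap 1 2) 0 = 1 from rfl,
    show (Equiv.swap (0:Fin 3) 1 * Equiv.swap 1 2) 1 = 2 from rfl,
    show (Equiv.swap (0:Fin 3) 1 * Equiv.swap 1 2) 2 = 0 from rfl,
    show (Equiv.swap (1:Fin 3) 2 * Equiv.swap 0 1) 0 = 2 from rfl,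
    show (Equiv.swap (1:Fin 3) 2 * Equiv.swap 0 1) 1 = 0 from rfl,
    show (Equiv.swap (1:Fin 3) 2 * Equiv.swap 0 1) 2 = 1 from rfl]
  linear_combination
    (dV * dW * lam 0 * lam 1 * lam 2 * mu 0 * mu 1 * mu 2) *
      (6 * ((C 1 0 * C 0 0) * (C 2 1 * C 1 1) - (C 1 1 * C 0 1) * (C 2 0 * C 1 0))) * h02
    - (dV * dW * lam 0 * lam 1 * lam 2 * mu 0 * mu 1 * mu 2) *
      (6 * ((C 0 0 * C 2 0) * (C 2 1 * C 1 1) - (C 0 1 * C 2 1) * (C 2 0 * C 1 0))) * h10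
    + (dV * dW * lam 0 * lam 1 * lam 2 * mu 0 * mu 1 * mu 2) *
      (6 * ((C 0 0 * C 2 0) * (C 1 1 * C 0 1) - (C 0 1 * C 2 1) * (C 1 0 * C 0 0))) * h21

lemma swap4 {A B : Type*} [Fintype A] [Fintype B] (F : A → A → B → B → ℝ) :
    ∑ σ : A, ∑ γ : A, ∑ i : B, ∑ j : B, F σ γ i j
      = ∑ i : B, ∑ j : B, ∑ σ : A, ∑ γ : A, F σ γ i j :=
  calc ∑ σ : A, ∑ γ : A, ∑ i : B, ∑ j : B, F σ γ i j
      = ∑ σ : A, ∑ i : B, ∑ γ : A, ∑ j : B, F σ γ i j :=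
        Finset.sum_congr rfl fun σ _ => Finset.sum_comm
    _ = ∑ i : B, ∑ σ : A, ∑ γ : A, ∑ j : B, F σ γ i j := Finset.sum_comm
    _ = ∑ i : B, ∑ σ : A, ∑ j : B, ∑ γ : A, F σ γ i j :=
        Finset.sum_congr rfl fun i _ => Finset.sum_congr rfl fun σ _ => Finset.sum_comm
    _ = ∑ i : B, ∑ j : B, ∑ σ : A, ∑ γ : A, F σ γ i j :=
        Finset.sum_congr rfl fun i _ => Finset.sum_comm

lemma part2 (P : Fin 3 → Fin 3 → Fin 3 → Fin 3 → ℝ)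
    (lam mu : Fin 3 → ℝ) (v w : Fin 3 → Fin 3 → ℝ)
    (hv : ∀ i j, (∑ k, v i k * v j k) = if i = j then 1 else 0)
    (hw : ∀ i j, (∑ k, w i k * w j k) = if i = j then 1 else 0)
    (hP : ∀ a b c d, P a b c d =
      ∑ s, (∑ i, lam i * (v i a * v i b * v i s)) * (∑ j, mu j * (w j c * w j d * w j s))) :
    ∑ k : Fin 3 → Fin 3, ∑ σ : Equiv.Perm (Fin 3), ∑ γ : Equiv.Perm (Fin 3),
      sg σ * sg γ * ∏ t, P (k t) (σ t) (k (t - 1)) (γ t) = 0 := by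
  have h02 : ∑ u, Cm v w 0 u * Cm v w 2 u = 0 := by
    rw [Cm_orth v w hv hw 0 2, if_neg (by decide)]
  have h10 : ∑ u, Cm v w 1 u * Cm v w 0 u = 0 := by
    rw [Cm_orth v w hv hw 1 0, if_neg (by decide)]
  have h21 : ∑ u, Cm v w 2 u * Cm v w 1 u = 0 := by
    rw [Cm_orth v w hv hw 2 1, if_neg (by decide)]
  calc ∑ k : Fin 3 → Fin 3, ∑ σ : Equiv.Perm (Fin 3), ∑ γ : Equiv.Perm (Fin 3),
        sg σ * sg γ * ∏ t, P (k t) (σ t) (k (t - 1)) (γ t)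
      = ∑ σ : Equiv.Perm (Fin 3), ∑ γ : Equiv.Perm (Fin 3), ∑ k : Fin 3 → Fin 3,
        sg σ * sg γ * ∏ t, P (k t) (σ t) (k (t - 1)) (γ t) := by
        rw [Finset.sum_comm]
        exact Finset.sum_congr rfl fun σ _ => Finset.sum_comm
    _ = ∑ σ : Equiv.Perm (Fin 3), ∑ γ : Equiv.Perm (Fin 3), sg σ * sg γ *
          ∑ k : Fin 3 → Fin 3, ∏ t, P (k t) (σ t) (k (t - 1)) (γ t) := by
        simp only [← Finset.mul_sum]
    _ = ∑ σ : Equiv.Perm (Fin 3), ∑ γ : Equiv.Perm (Fin 3), sg σ * sg γ *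
          ∑ i : Fin 3 → Fin 3, ∑ j : Fin 3 → Fin 3,
            ((∏ t, (lam (i t) * mu (j t) * Cm v w (i t) (j t))) *
              (∏ t, Cm v w (i t) (j (t + 1)))) *
            ((∏ t, v (i t) (σ t)) * (∏ t, w (j t) (γ t))) := by
        exact Finset.sum_congr rfl fun σ _ => Finset.sum_congr rfl fun γ _ => by
          rw [key lam mu v w P σ γ hP]
    _ = ∑ σ : Equiv.Perm (Fin 3), ∑ γ : Equiv.Perm (Fin 3),
          ∑ i : Fin 3 → Fin 3, ∑ j : Fin 3 → Fin 3, sg σ * sg γ *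
            (((∏ t, (lam (i t) * mu (j t) * Cm v w (i t) (j t))) *
              (∏ t, Cm v w (i t) (j (t + 1)))) *
            ((∏ t, v (i t) (σ t)) * (∏ t, w (j t) (γ t)))) := by
        simp only [Finset.mul_sum]
    _ = ∑ i : Fin 3 → Fin 3, ∑ j : Fin 3 → Fin 3,
          ∑ σ : Equiv.Perm (Fin 3), ∑ γ : Equiv.Perm (Fin 3), sg σ * sg γ *
            (((∏ t, (lam (i t) * mu (j t) * Cm v w (i t) (j t))) *
              (∏ t, Cm v w (i t) (j (t + 1)))) *
            ((∏ t, v (i t) (σ t)) * (∏ t, w (j t) (γ t)))) := swap4 _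
    _ = ∑ i : Fin 3 → Fin 3, ∑ j : Fin 3 → Fin 3,
          ((∏ t, (lam (i t) * mu (j t) * Cm v w (i t) (j t))) *
            (∏ t, Cm v w (i t) (j (t + 1)))) *
          (((Matrix.of v).submatrix i id).det * ((Matrix.of w).submatrix j id).det) := by
        refine Finset.sum_congr rfl fun i _ => Finset.sum_congr rfl fun j _ => ?_
        rw [← permsum_det v i, ← permsum_det w j, Finset.sum_mul_sum, Finset.mul_sum]
        refine Finset.sum_congr rfl fun σ _ => ?_
        rw [Finset.mul_sum]
        exact Finset.sum_congr rfl fun γ _ => by ring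
    _ = ∑ α : Equiv.Perm (Fin 3), ∑ j : Fin 3 → Fin 3,
          ((∏ t, (lam (α t) * mu (j t) * Cm v w (α t) (j t))) *
            (∏ t, Cm v w (α t) (j (t + 1)))) *
          (((Matrix.of v).submatrix (⇑α) id).det * ((Matrix.of w).submatrix j id).det) := by
        exact sum_fun3_perm _ fun g hg => Finset.sum_eq_zero fun j _ => by
          rw [det_zero_of_not_inj v g hg]; ring
    _ = ∑ α : Equiv.Perm (Fin 3), ∑ β : Equiv.Perm (Fin 3),
          ((∏ t, (lam (α t) * mu (β t) * Cm v w (α t) (β t))) *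
            (∏ t, Cm v w (α t) (β (t + 1)))) *
          (((Matrix.of v).submatrix (⇑α) id).det * ((Matrix.of w).submatrix (⇑β) id).det) := by
        exact Finset.sum_congr rfl fun α _ => sum_fun3_perm _ fun g hg => by
          rw [det_zero_of_not_inj w g hg]; ring
    _ = ∑ α : Equiv.Perm (Fin 3), ∑ β : Equiv.Perm (Fin 3),
          ((∏ t, (lam (α t) * mu (β t) * Cm v w (α t) (β t))) *
            (∏ t, Cm v w (α t) (β (t + 1)))) *
          ((sg α * (Matrix.of v).det) * (sg β * (Matrix.of w).det)) := by
        exact Finset.sum_congr rfl fun α _ => Finset.sum_congr rfl fun β _ => by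
          rw [det_perm v α, det_perm w β]
    _ = 0 := Kfinal lam mu ((Matrix.of v).det) ((Matrix.of w).det) (Cm v w) h02 h10 h21

/-- For `n = 3`, the polynomial `h₃` does not lie in the ideal generated by `𝒫₃ ∪ 𝒬₃`,
yet it vanishes on `SOT_{2,3}`. -/
theorem h3_not_in_ideal_but_vanishes_on_SOT :
    hpoly 3 ∉ Ideal.span (Pset 3 ∪ Qset 3) ∧
    ∀ P : Fin 3 → Fin 3 → Fin 3 → Fin 3 → ℝ, InSOT2 3 P →
      MvPolynomial.eval (fun x => P x.1 x.2.1 x.2.2.1 x.2.2.2) (hpoly 3) = 0 := by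
  constructor
  · intro hmem
    set pt : Fin 3 × Fin 3 × Fin 3 × Fin 3 → ℝ :=
      fun x => xm x.1 x.2.1 * xm x.2.2.1 x.2.2.2 with hpt
    have hle : Ideal.span (Pset 3 ∪ Qset 3) ≤ RingHom.ker (eval pt) := by
      rw [Ideal.span_le]
      rintro f (⟨a, b, c, d, h | h | h | h⟩ | ⟨a, b, c, d, e, f', h | h⟩) <;> subst h <;>
        refine SetLike.mem_coe.mpr (RingHom.mem_ker.mpr ?_)
      · simp
      · simp only [map_sub, eval_X, hpt]
        rw [xm_symm a b]; ring
      · simp only [map_sub, eval_X, hpt]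
        rw [xm_symm c d]; ring
      · simp only [map_sub, eval_X, hpt]
        rw [xm_symm a b, xm_symm c d]; ring
      · simp only [map_sum, map_sub, _root_.map_mul, eval_X, hpt]
        exact Finset.sum_eq_zero fun t _ => by ring
      · simp only [map_sum, map_sub, _root_.map_mul, eval_X, hpt]
        exact Finset.sum_eq_zero fun t _ => by ring
    have h0 : eval pt (hpoly 3) = 0 := RingHom.mem_ker.mp (hle hmem)
    rw [hpt, part1_value] at h0
    norm_num at h0
  · rintro P ⟨lam, mu, v, w, hv, hw, hP⟩
    rw [evalA P]
    exact part2 P lam mu v w hv hw hP
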